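/- Let F be a field, Γ an additive abelian group, ε a skew-symmetric bicharacter of Γ, A a Γ-graded associative unital ε-commutative F-algebra, and D a set of homogeneous color derivations of A. Let χ : D → F satisfy χ(∂) = 0 whenever ∂ has nonzero degree, and let u ∈ A be a homogeneous unit with ∂(u) = χ(∂)·u for all ∂ ∈ D. Then for every function ψ : D → F vanishing on elements of nonzero degree and every n ∈ ℕ, one has u·A(ψ)^{(n)} = A(χ+ψ)^{(n)}. In particular, A(χ)^{(0)} = u·A(0)^{(0)}, where 0 denotes the zero function on D. -/

import Mathlib

/-- `d` is a homogeneous color derivation of degree `lam` of the `Γ`-graded algebra `A`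
(with grading `𝒜`) relative to the bicharacter `ε`. -/
def IsHomColorDer {F : Type*} [Field F] {Γ : Type*} [AddCommGroup Γ]
    {A : Type*} [Ring A] [Algebra F A]
    (ε : Γ → Γ → F) (𝒜 : Γ → Submodule F A) (lam : Γ) (d : Module.End F A) : Prop :=
  (∀ μ : Γ, ∀ a ∈ 𝒜 μ, d a ∈ 𝒜 (lam + μ)) ∧
  (∀ (l m : Γ) (a b : A), a ∈ 𝒜 l → b ∈ 𝒜 m →
    d (a * b) = d a * b + ε lam l • (a * d b))

/-- The generalized weight space `A(χ)^{(m)}`: the set of `u ∈ A` killed by every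
composition `(d₁ − χ(d₁))∘⋯∘(d_{m+1} − χ(d_{m+1}))` with `d₁,…,d_{m+1} ∈ D`. -/
def wtSpace {F : Type*} [Field F] {A : Type*} [Ring A] [Algebra F A]
    (D : Set (Module.End F A)) (χ : Module.End F A → F) : ℕ → Set A
  | 0 => {u : A | ∀ d ∈ D, d u - χ d • u = 0}
  | n + 1 => {u : A | ∀ d ∈ D, d u - χ d • u ∈ wtSpace D χ n}

/-- If `u` is a homogeneous unit with `∂(u) = χ(∂)·u` for all `∂ ∈ D`
(`χ` vanishing on derivations of nonzero degree), then `u·A(ψ)^{(n)} = A(χ+ψ)^{(n)}`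
for every `ψ` vanishing on derivations of nonzero degree and every `n`; in particular
`A(χ)^{(0)} = u·A(0)^{(0)}`. -/
theorem wtSpace_translate_by_unit
    {F : Type*} [Field F] {Γ : Type*} [AddCommGroup Γ] [DecidableEq Γ]
    {A : Type*} [Ring A] [Algebra F A]
    (ε : Γ → Γ → F)
    (hskew : ∀ l m : Γ, ε l m * ε m l = 1)
    (hmul : ∀ l m n : Γ, ε l (m + n) = ε l m * ε l n)
    (𝒜 : Γ → Submodule F A) [GradedAlgebra 𝒜]
    (hcomm : ∀ (l m : Γ) (a b : A), a ∈ 𝒜 l → b ∈ 𝒜 m → a * b = ε l m • (b * a))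
    (D : Set (Module.End F A)) (deg : Module.End F A → Γ)
    (hD : ∀ d ∈ D, IsHomColorDer ε 𝒜 (deg d) d)
    (χ : Module.End F A → F)
    (hχ : ∀ d ∈ D, deg d ≠ 0 → χ d = 0)
    (u : Aˣ) (μ : Γ) (hu : (u : A) ∈ 𝒜 μ) (hune : (u : A) ≠ 0)
    (hueig : ∀ d ∈ D, d (u : A) = χ d • (u : A)) :
    (∀ ψ : Module.End F A → F, (∀ d ∈ D, deg d ≠ 0 → ψ d = 0) → ∀ n : ℕ,
      (fun w : A => (u : A) * w) '' wtSpace D ψ n = wtSpace D (χ + ψ) n) ∧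
    wtSpace D χ 0 =
      (fun w : A => (u : A) * w) '' wtSpace D (0 : Module.End F A → F) 0 := by
  -- ε is nowhere zero
  have hεne : ∀ l m : Γ, ε l m ≠ 0 := by
    intro l m h
    simpa [h] using hskew l m
  -- ε l 0 = 1
  have hε0 : ∀ l : Γ, ε l 0 = 1 := by
    intro l
    have h1 : ε l 0 * ε l 0 = ε l 0 * 1 := by
      rw [mul_one, ← hmul, add_zero]
    exact mul_left_cancel₀ (hεne l 0) h1
  -- ε 0 m = 1
  have h0ε : ∀ m : Γ, ε 0 m = 1 := by
    intro m
    have := hskew 0 m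
    rw [hε0 m, mul_one] at this
    exact this
  -- generalized Leibniz rule against the homogeneous u
  have hleib : ∀ d ∈ D, ∀ w : A,
      d ((u : A) * w) = d (u : A) * w + ε (deg d) μ • ((u : A) * d w) := by
    intro d hd w
    induction w using DirectSum.Decomposition.inductionOn 𝒜 with
    | zero => simp
    | homogeneous x =>
        exact (hD d hd).2 μ _ _ _ hu x.2
    | add a b ha hb =>
        rw [mul_add, map_add, ha, hb, map_add, mul_add, mul_add, smul_add]
        abel
  -- key identity
  have hkey : ∀ (ψ : Module.End F A → F), (∀ d ∈ D, deg d ≠ 0 → ψ d = 0) →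
      ∀ d ∈ D, ∀ w : A,
      d ((u : A) * w) - (χ d + ψ d) • ((u : A) * w)
        = ε (deg d) μ • ((u : A) * (d w - ψ d • w)) := by
    intro ψ hψ d hd w
    by_cases h0 : deg d = 0
    · rw [hleib d hd w, hueig d hd, h0, h0ε, one_smul, add_smul, smul_mul_assoc,
        mul_sub, mul_smul_comm]
      module
    · rw [hleib d hd w, hueig d hd, hχ d hd h0, hψ d hd h0]
      simp
  -- weight spaces are closed under scalar multiplication
  have hsmul : ∀ (χ' : Module.End F A → F) (n : ℕ) (c : F) (v : A),
      v ∈ wtSpace D χ' n → c • v ∈ wtSpace D χ' n := by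
    intro χ' n
    induction n with
    | zero =>
        intro c v hv d hd
        have h1 : d (c • v) - χ' d • c • v = c • (d v - χ' d • v) := by
          rw [map_smul, smul_sub, smul_comm]
        rw [h1, hv d hd, smul_zero]
    | succ n ih =>
        intro c v hv d hd
        have h1 : d (c • v) - χ' d • c • v = c • (d v - χ' d • v) := by
          rw [map_smul, smul_sub, smul_comm]
        rw [h1]
        exact ih c _ (hv d hd)
  -- main equivalence
  have hiff : ∀ (ψ : Module.End F A → F), (∀ d ∈ D, deg d ≠ 0 → ψ d = 0) →
      ∀ (n : ℕ) (w : A),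
      (u : A) * w ∈ wtSpace D (χ + ψ) n ↔ w ∈ wtSpace D ψ n := by
    intro ψ hψ n
    induction n with
    | zero =>
        intro w
        constructor
        · intro h d hd
          have h1 := h d hd
          rw [show (χ + ψ) d = χ d + ψ d from rfl, hkey ψ hψ d hd w] at h1
          rcases smul_eq_zero.mp h1 with h2 | h2
          · exact absurd h2 (hεne _ _)
          · exact (Units.mul_right_eq_zero u).mp h2
        · intro h d hd
          rw [show (χ + ψ) d = χ d + ψ d from rfl, hkey ψ hψ d hd w, h d hd,
            mul_zero, smul_zero]
    | succ n ih =>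
        intro w
        constructor
        · intro h d hd
          have h1 := h d hd
          rw [show (χ + ψ) d = χ d + ψ d from rfl, hkey ψ hψ d hd w] at h1
          have h2 := hsmul (χ + ψ) n (ε (deg d) μ)⁻¹ _ h1
          rw [inv_smul_smul₀ (hεne _ _)] at h2
          exact (ih _).mp h2
        · intro h d hd
          rw [show (χ + ψ) d = χ d + ψ d from rfl, hkey ψ hψ d hd w]
          exact hsmul _ n _ _ ((ih _).mpr (h d hd))
  have hpart1 : ∀ ψ : Module.End F A → F, (∀ d ∈ D, deg d ≠ 0 → ψ d = 0) → ∀ n : ℕ,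
      (fun w : A => (u : A) * w) '' wtSpace D ψ n = wtSpace D (χ + ψ) n := by
    intro ψ hψ n
    ext v
    constructor
    · rintro ⟨w, hw, rfl⟩
      exact (hiff ψ hψ n w).mpr hw
    · intro hv
      refine ⟨(↑u⁻¹ : A) * v, ?_, ?_⟩
      · apply (hiff ψ hψ n _).mp
        rw [Units.mul_inv_cancel_left]
        exact hv
      · exact Units.mul_inv_cancel_left u v
  refine ⟨hpart1, ?_⟩
  have h2 := hpart1 0 (fun d _ _ => rfl) 0
  rw [add_zero] at h2
  exact h2.symm
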